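/- arXiv:2308.00915 — 4 statements merged into one kernel-verified Lean document; each statement's English description precedes it below -/
import Mathlib

section
/- Let n ∈ ℕ, 0 < d ≤ n, 0 < p < ∞, and 1 ≤ θ ≤ n/d. Then for every measurable function f on ℝ^n, ‖f‖_{L^{θp}(H^{θd})} ≤ θ^{1/(θp)} ‖f‖_{L^p(H^d)}. -/
open MeasureTheory Set ENNReal

noncomputable section

/-- The axis-parallel closed cube with corner `a` and side length `l`. -/
def cubeSet (n : ℕ) (a : Fin n → ℝ) (l : ℝ) : Set (Fin n → ℝ) :=
  {x | ∀ i, a i ≤ x i ∧ x i ≤ a i + l}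

/-- The `d`-dimensional Hausdorff content of `E ⊆ ℝⁿ`, defined as the infimum of
`∑ ℓ(Q_j)^d` over all countable coverings of `E` by axis-parallel cubes. -/
def hContent (n : ℕ) (d : ℝ) (E : Set (Fin n → ℝ)) : ℝ≥0∞ :=
  ⨅ (c : ℕ → (Fin n → ℝ) × ℝ) (_ : E ⊆ ⋃ j, cubeSet n (c j).1 (c j).2),
    ∑' j, ENNReal.ofReal ((c j).2) ^ d

/-- The Choquet integral `∫ g dH^d = ∫_0^∞ H^d({x : g x > t}) dt` of a
nonnegative (`ℝ≥0∞`-valued) function. -/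
def choquetIntegral (n : ℕ) (d : ℝ) (g : (Fin n → ℝ) → ℝ≥0∞) : ℝ≥0∞ :=
  ∫⁻ t in Set.Ioi (0 : ℝ), hContent n d {x | ENNReal.ofReal t < g x}

/-- The Choquet `L^p(H^d)` norm of an `ℝ≥0∞`-valued function. -/
def choquetLpNormE (n : ℕ) (d p : ℝ) (g : (Fin n → ℝ) → ℝ≥0∞) : ℝ≥0∞ :=
  (choquetIntegral n d fun x => g x ^ p) ^ (1 / p)

/-- The Choquet `L^p(H^d)` norm of a real-valued function. -/
def choquetLpNorm (n : ℕ) (d p : ℝ) (f : (Fin n → ℝ) → ℝ) : ℝ≥0∞ :=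
  choquetLpNormE n d p fun x => ENNReal.ofReal |f x|

/-- The weak Choquet `L^p(H^d)` norm of an `ℝ≥0∞`-valued function. -/
def weakNormE (n : ℕ) (d p : ℝ) (g : (Fin n → ℝ) → ℝ≥0∞) : ℝ≥0∞ :=
  ⨆ (t : ℝ) (_ : 0 < t),
    ENNReal.ofReal t * hContent n d {x | ENNReal.ofReal t < g x} ^ (1 / p)

/-- The weak Choquet `L^p(H^d)` norm of a real-valued function. -/
def weakChoquetLpNorm (n : ℕ) (d p : ℝ) (f : (Fin n → ℝ) → ℝ) : ℝ≥0∞ :=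
  weakNormE n d p fun x => ENNReal.ofReal |f x|

/-- The Choquet integral `∫_E |f|^q dH^d` over a set `E`. -/
def choquetSetLq (n : ℕ) (d q : ℝ) (E : Set (Fin n → ℝ)) (f : (Fin n → ℝ) → ℝ) : ℝ≥0∞ :=
  choquetIntegral n d (E.indicator fun x => ENNReal.ofReal |f x| ^ q)

/-- The Choquet–Morrey `𝓜^p_q(H^d)` norm of an `ℝ≥0∞`-valued function. -/
def morreyNormE (n : ℕ) (d p q : ℝ) (g : (Fin n → ℝ) → ℝ≥0∞) : ℝ≥0∞ :=
  ⨆ (a : Fin n → ℝ) (l : ℝ) (_ : 0 < l),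
    ENNReal.ofReal (l ^ (d / p - d / q)) *
      (choquetIntegral n d ((cubeSet n a l).indicator fun x => g x ^ q)) ^ (1 / q)

/-- The Choquet–Morrey `𝓜^p_q(H^d)` norm of a real-valued function. -/
def morreyNorm (n : ℕ) (d p q : ℝ) (f : (Fin n → ℝ) → ℝ) : ℝ≥0∞ :=
  morreyNormE n d p q fun x => ENNReal.ofReal |f x|

/-- The Lorentz `L^{p,r}(H^d)` quasinorm of a real-valued function. -/
def lorentzNorm (n : ℕ) (d p r : ℝ) (f : (Fin n → ℝ) → ℝ) : ℝ≥0∞ :=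
  (∫⁻ t in Set.Ioi (0 : ℝ),
      ((ENNReal.ofReal t) ^ p * hContent n d {x | t < |f x|}) ^ (r / p) *
        (ENNReal.ofReal t)⁻¹) ^ (1 / r)

/-- The fractional maximal operator `M_α` (with values in `ℝ≥0∞`). -/
def fracMaximal (n : ℕ) (α : ℝ) (f : (Fin n → ℝ) → ℝ) (x : Fin n → ℝ) : ℝ≥0∞ :=
  ⨆ (a : Fin n → ℝ) (l : ℝ) (_ : 0 < l) (_ : x ∈ cubeSet n a l),
    ENNReal.ofReal (l ^ (α - (n : ℝ))) * ∫⁻ y in cubeSet n a l, ENNReal.ofReal |f y|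

/-- The Euclidean norm on `Fin n → ℝ`. -/
def euclNorm {n : ℕ} (x : Fin n → ℝ) : ℝ := Real.sqrt (∑ i, x i ^ 2)

/-- The fractional integral operator `I_α`. -/
def fracIntegral (n : ℕ) (α : ℝ) (f : (Fin n → ℝ) → ℝ) (x : Fin n → ℝ) : ℝ :=
  ∫ y, f y / euclNorm (x - y) ^ ((n : ℝ) - α)

lemma hContent_mono {n : ℕ} {d : ℝ} {E F : Set (Fin n → ℝ)} (h : E ⊆ F) :
    hContent n d E ≤ hContent n d F :=
  le_iInf fun c => le_iInf fun hc => iInf₂_le c (h.trans hc)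

lemma tsum_rpow_le (a : ℕ → ℝ≥0∞) {θ : ℝ} (hθ : 1 ≤ θ) :
    ∑' j, a j ^ θ ≤ (∑' j, a j) ^ θ := by
  have hθ0 : (0:ℝ) < θ := lt_of_lt_of_le one_pos hθ
  set S := ∑' j, a j with hSdef
  rcases eq_or_ne S ∞ with hS | hS
  · rw [hS, ENNReal.top_rpow_of_pos hθ0]; exact le_top
  rcases eq_or_ne S 0 with h0 | h0
  · have ha : ∀ j, a j = 0 := fun j =>
      le_antisymm (h0 ▸ ENNReal.le_tsum j) zero_le
    simp [ha, ENNReal.zero_rpow_of_pos hθ0, h0]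
  calc ∑' j, a j ^ θ ≤ ∑' j, S ^ (θ - 1) * a j := by
        refine ENNReal.tsum_le_tsum fun j => ?_
        rcases eq_or_ne (a j) 0 with hj | hj
        · simp [hj, ENNReal.zero_rpow_of_pos hθ0]
        · have hjS : a j ≤ S := ENNReal.le_tsum j
          have hjt : a j ≠ ∞ := fun hh => hS (top_le_iff.1 (hh ▸ hjS))
          have : a j ^ θ = a j ^ (θ - 1) * a j := by
            nth_rewrite 1 [show θ = (θ - 1) + 1 by ring]
            rw [ENNReal.rpow_add _ _ hj hjt, ENNReal.rpow_one]
          rw [this]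
          exact mul_le_mul_left (ENNReal.rpow_le_rpow hjS (by linarith)) _
    _ = S ^ (θ - 1) * S := by rw [ENNReal.tsum_mul_left]
    _ = S ^ θ := by
        conv_rhs => rw [show θ = (θ - 1) + 1 by ring]
        rw [ENNReal.rpow_add _ _ h0 hS, ENNReal.rpow_one]

lemma hContent_rpow_le {n : ℕ} {d θ : ℝ} (hθ : 1 ≤ θ) (E : Set (Fin n → ℝ)) :
    hContent n (θ * d) E ≤ hContent n d E ^ θ := by
  have hθ0 : (0:ℝ) < θ := lt_of_lt_of_le one_pos hθ
  rw [← ENNReal.rpow_inv_le_iff hθ0]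
  refine le_iInf fun c => le_iInf fun hc => ?_
  rw [ENNReal.rpow_inv_le_iff hθ0]
  calc hContent n (θ * d) E ≤ ∑' j, ENNReal.ofReal ((c j).2) ^ (θ * d) :=
        iInf₂_le c hc
    _ = ∑' j, (ENNReal.ofReal ((c j).2) ^ d) ^ θ := by
        congr 1; funext j; rw [mul_comm θ d, ENNReal.rpow_mul]
    _ ≤ (∑' j, ENNReal.ofReal ((c j).2) ^ d) ^ θ :=
        tsum_rpow_le _ hθ

/-- Lemma 2.1 (Orobitg–Verdera): `‖f‖_{L^{θp}(H^{θd})} ≤ θ^{1/(θp)} ‖f‖_{L^p(H^d)}`. -/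
theorem choquetLpNorm_embedding (n : ℕ) (d p θ : ℝ)
    (hd : 0 < d) (hdn : d ≤ n) (hp : 0 < p) (hθ1 : 1 ≤ θ) (hθ : θ ≤ n / d) :
    ∀ f : (Fin n → ℝ) → ℝ, Measurable f →
      choquetLpNorm n (θ * d) (θ * p) f ≤
        ENNReal.ofReal (θ ^ (1 / (θ * p))) * choquetLpNorm n d p f := by
  intro f _hf
  have hθ0 : (0:ℝ) < θ := lt_of_lt_of_le one_pos hθ1
  have hθp : (0:ℝ) < θ * p := mul_pos hθ0 hp
  set g : (Fin n → ℝ) → ℝ≥0∞ := fun x => ENNReal.ofReal |f x| with hg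
  set φ : ℝ → ℝ≥0∞ := fun s => hContent n d {x | ENNReal.ofReal s < g x ^ p} with hφ
  set A : ℝ≥0∞ := ∫⁻ s in Set.Ioi (0:ℝ), φ s with hA
  have hRHS : choquetLpNorm n d p f = A ^ (1/p) := rfl
  rcases eq_or_ne A ∞ with hAtop | hAtop
  · rw [hRHS, hAtop, ENNReal.top_rpow_of_pos (by positivity),
      ENNReal.mul_top (ne_of_gt (ENNReal.ofReal_pos.2 (Real.rpow_pos_of_pos hθ0 _)))]
    exact le_top
  have hφanti : Antitone φ := fun s s' hss =>
    hContent_mono fun x hx => lt_of_le_of_lt (ENNReal.ofReal_le_ofReal hss) hx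
  have hsA : ∀ s : ℝ, 0 < s → ENNReal.ofReal s * φ s ≤ A := by
    intro s hs
    have h1 : ENNReal.ofReal s * φ s = ∫⁻ _ in Set.Ioo (0:ℝ) s, φ s := by
      rw [setLIntegral_const, Real.volume_Ioo, sub_zero, mul_comm]
    rw [h1]
    calc ∫⁻ _ in Set.Ioo (0:ℝ) s, φ s ≤ ∫⁻ u in Set.Ioo (0:ℝ) s, φ u :=
          setLIntegral_mono' measurableSet_Ioo fun u hu => hφanti hu.2.le
      _ ≤ A := lintegral_mono_set Set.Ioo_subset_Ioi_self
  set Φ : ℝ → ℝ≥0∞ := fun s => φ s ^ θ with hΦ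
  have hset : ∀ t : ℝ, t ∈ Set.Ioi (0:ℝ) →
      hContent n (θ*d) {x | ENNReal.ofReal t < g x ^ (θ*p)} ≤ Φ (t ^ (1/θ)) := by
    intro t ht
    have h2 : (ENNReal.ofReal (t ^ (1/θ))) ^ θ = ENNReal.ofReal t := by
      rw [ENNReal.ofReal_rpow_of_pos (Real.rpow_pos_of_pos ht _), one_div,
        Real.rpow_inv_rpow ht.le hθ0.ne']
    have hEq : {x | ENNReal.ofReal t < g x ^ (θ*p)}
        = {x | ENNReal.ofReal (t ^ (1/θ)) < g x ^ p} := by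
      ext x
      simp only [Set.mem_setOf_eq]
      rw [mul_comm θ p, ENNReal.rpow_mul,
        ← ENNReal.rpow_lt_rpow_iff hθ0 (x := ENNReal.ofReal (t ^ (1/θ))), h2]
    rw [hEq]
    exact hContent_rpow_le hθ1 _
  have himg : (fun x : ℝ => x ^ θ) '' Set.Ioi 0 = Set.Ioi (0:ℝ) := by
    ext y
    constructor
    · rintro ⟨x, hx, rfl⟩; exact Real.rpow_pos_of_pos hx θ
    · intro hy
      refine ⟨y ^ (1/θ), Real.rpow_pos_of_pos hy _, ?_⟩
      simp only [one_div]
      exact Real.rpow_inv_rpow hy.le hθ0.ne'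
  have hderiv : ∀ x ∈ Set.Ioi (0:ℝ),
      HasDerivWithinAt (fun x : ℝ => x ^ θ) (θ * x ^ (θ - 1)) (Set.Ioi 0) x := fun x hx =>
    (Real.hasDerivAt_rpow_const (Or.inl (ne_of_gt hx))).hasDerivWithinAt
  have hinj : Set.InjOn (fun x : ℝ => x ^ θ) (Set.Ioi 0) :=
    (Real.rpow_left_injOn hθ0.ne').mono
      (show Set.Ioi (0:ℝ) ⊆ {y | 0 ≤ y} from fun x (hx : (0:ℝ) < x) => show (0:ℝ) ≤ x from le_of_lt hx)
  have hsub : (∫⁻ t in Set.Ioi (0:ℝ), Φ (t ^ (1/θ))) =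
      ∫⁻ x in Set.Ioi (0:ℝ), ENNReal.ofReal |θ * x ^ (θ-1)| * Φ ((x ^ θ) ^ (1/θ)) := by
    conv_lhs => rw [← himg]
    simpa only [ContinuousLinearMap.det_toSpanSingleton] using
      lintegral_image_eq_lintegral_abs_det_fderiv_mul volume measurableSet_Ioi
        (fun x hx => (hderiv x hx).hasFDerivWithinAt) hinj (fun t => Φ (t ^ (1/θ)))
  have hpt : ∀ x : ℝ, x ∈ Set.Ioi (0:ℝ) →
      ENNReal.ofReal |θ * x ^ (θ-1)| * Φ ((x ^ θ) ^ (1/θ))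
        ≤ (ENNReal.ofReal θ * A ^ (θ-1)) * φ x := by
    intro s hs
    have hs0 : (0:ℝ) < s := hs
    have hx1 : ((s ^ θ) ^ (1/θ)) = s := by
      rw [one_div, Real.rpow_rpow_inv hs0.le hθ0.ne']
    rw [hx1, abs_of_pos (by positivity)]
    simp only [hΦ]
    rcases eq_or_ne (φ s) 0 with h0 | h0
    · simp [h0, ENNReal.zero_rpow_of_pos hθ0]
    have hfin : φ s ≠ ∞ := by
      intro htop
      apply hAtop
      have h3 := hsA s hs0
      rw [htop, ENNReal.mul_top
        (ne_of_gt (ENNReal.ofReal_pos.2 hs0))] at h3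
      exact top_le_iff.1 h3
    have e1 : ENNReal.ofReal (θ * s ^ (θ-1))
        = ENNReal.ofReal θ * (ENNReal.ofReal s) ^ (θ-1) := by
      rw [ENNReal.ofReal_mul hθ0.le, ENNReal.ofReal_rpow_of_pos hs0]
    have e2 : φ s ^ θ = φ s ^ (θ-1) * φ s := by
      conv_lhs => rw [show θ = (θ-1)+1 by ring]
      rw [ENNReal.rpow_add _ _ h0 hfin, ENNReal.rpow_one]
    rw [e1, e2]
    calc ENNReal.ofReal θ * ENNReal.ofReal s ^ (θ-1) * (φ s ^ (θ-1) * φ s)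
        = ENNReal.ofReal θ * ((ENNReal.ofReal s * φ s) ^ (θ-1) * φ s) := by
          rw [ENNReal.mul_rpow_of_nonneg _ _ (by linarith : (0:ℝ) ≤ θ-1)]; ring
      _ ≤ ENNReal.ofReal θ * (A ^ (θ-1) * φ s) := by
          gcongr
          exact hsA s hs0
      _ = ENNReal.ofReal θ * A ^ (θ-1) * φ s := by ring
  calc choquetLpNorm n (θ*d) (θ*p) f
      = (∫⁻ t in Set.Ioi (0:ℝ),
          hContent n (θ*d) {x | ENNReal.ofReal t < g x ^ (θ*p)}) ^ (1/(θ*p)) := rfl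
    _ ≤ (∫⁻ t in Set.Ioi (0:ℝ), Φ (t ^ (1/θ))) ^ (1/(θ*p)) :=
        ENNReal.rpow_le_rpow (setLIntegral_mono' measurableSet_Ioi hset) (by positivity)
    _ = (∫⁻ x in Set.Ioi (0:ℝ),
          ENNReal.ofReal |θ * x ^ (θ-1)| * Φ ((x ^ θ) ^ (1/θ))) ^ (1/(θ*p)) := by rw [hsub]
    _ ≤ ((ENNReal.ofReal θ * A ^ (θ-1)) * A) ^ (1/(θ*p)) := by
        apply ENNReal.rpow_le_rpow _ (by positivity)
        calc ∫⁻ x in Set.Ioi (0:ℝ), ENNReal.ofReal |θ * x ^ (θ-1)| * Φ ((x ^ θ) ^ (1/θ))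
            ≤ ∫⁻ x in Set.Ioi (0:ℝ), (ENNReal.ofReal θ * A ^ (θ-1)) * φ x :=
              setLIntegral_mono' measurableSet_Ioi hpt
          _ = (ENNReal.ofReal θ * A ^ (θ-1)) * A :=
              lintegral_const_mul' _ _ (ENNReal.mul_ne_top ENNReal.ofReal_ne_top
                (ENNReal.rpow_lt_top_of_nonneg (by linarith) hAtop).ne)
    _ ≤ (ENNReal.ofReal θ * A ^ θ) ^ (1/(θ*p)) := by
        apply ENNReal.rpow_le_rpow _ (by positivity)
        rcases eq_or_ne A 0 with h0 | h0
        · simp [h0, ENNReal.zero_rpow_of_pos hθ0]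
        · apply le_of_eq
          rw [mul_assoc]
          congr 1
          conv_rhs => rw [show θ = (θ-1)+1 by ring]
          rw [ENNReal.rpow_add _ _ h0 hAtop, ENNReal.rpow_one]
    _ = ENNReal.ofReal (θ ^ (1/(θ*p))) * choquetLpNorm n d p f := by
        rw [hRHS, ENNReal.mul_rpow_of_nonneg _ _ (by positivity),
          ENNReal.ofReal_rpow_of_pos hθ0, ← ENNReal.rpow_mul,
          show θ * (1/(θ*p)) = 1/p by field_simp]


end
end

section
/- Let n ∈ ℕ, 0 < d ≤ n, and 0 < q < p ≤ r < ∞. Then there is a constant C > 0 (independent of f) such that for every measurable function f on ℝ^n, ‖f‖_{M^r_q(H^d)} ≤ C ‖f‖_{M^r_{p,∞}(H^d)}, where ‖f‖_{M^r_{p,∞}(H^d)} = sup_Q ℓ(Q)^{d/r − d/p} ‖f χ_Q‖_{L^{p,∞}(H^d)}, the supremum over all axis-parallel cubes Q. -/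
open MeasureTheory Set ENNReal

noncomputable section

/-- The content of a cube is at most `l^d`. -/
lemma hContent_cube_le {n : ℕ} {d : ℝ} (hd : 0 < d) (a : Fin n → ℝ) (l : ℝ) :
    hContent n d (cubeSet n a l) ≤ ENNReal.ofReal l ^ d := by
  set c : ℕ → (Fin n → ℝ) × ℝ := fun j => if j = 0 then (a, l) else (a, 0) with hc
  have hcov : cubeSet n a l ⊆ ⋃ j, cubeSet n (c j).1 (c j).2 := by
    intro x hx
    exact Set.mem_iUnion.2 ⟨0, by simpa [hc] using hx⟩
  have hsum : (∑' j, ENNReal.ofReal ((c j).2) ^ d) = ENNReal.ofReal l ^ d := by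
    rw [tsum_eq_single 0]
    · simp [hc]
    · intro j hj
      simp [hc, hj, ENNReal.zero_rpow_of_pos hd]
  calc hContent n d (cubeSet n a l) ≤ ∑' j, ENNReal.ofReal ((c j).2) ^ d :=
        iInf₂_le c hcov
    _ = ENNReal.ofReal l ^ d := hsum

/-- Chebyshev-type inversion of the weak norm. -/
lemma hContent_le_of_weak {n : ℕ} {d p : ℝ} (hp : 0 < p) (g : (Fin n → ℝ) → ℝ≥0∞)
    {s : ℝ} (hs : 0 < s) :
    hContent n d {x | ENNReal.ofReal s < g x} ≤ (weakNormE n d p g / ENNReal.ofReal s) ^ p := by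
  set h := hContent n d {x | ENNReal.ofReal s < g x}
  have h1 : ENNReal.ofReal s * h ^ (1 / p) ≤ weakNormE n d p g :=
    le_iSup₂ (f := fun (t : ℝ) (_ : 0 < t) =>
      ENNReal.ofReal t * hContent n d {x | ENNReal.ofReal t < g x} ^ (1 / p)) s hs
  have h2 : h ^ (1 / p) ≤ weakNormE n d p g / ENNReal.ofReal s :=
    (ENNReal.le_div_iff_mul_le (Or.inl ((ENNReal.ofReal_pos.2 hs).ne'))
      (Or.inl ENNReal.ofReal_ne_top)).2 (by rwa [mul_comm])
  calc h = (h ^ (1 / p)) ^ p := by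
        rw [one_div, ENNReal.rpow_inv_rpow hp.ne']
    _ ≤ (weakNormE n d p g / ENNReal.ofReal s) ^ p :=
        ENNReal.rpow_le_rpow h2 hp.le

/-- Inequality (2.4): `‖f‖_{𝓜^r_q(H^d)} ≲ ‖f‖_{𝓜^r_{p,∞}(H^d)}` for `0 < q < p ≤ r < ∞`. -/
theorem morrey_le_weak_morrey (n : ℕ) (d p q r : ℝ)
    (hd : 0 < d) (hdn : d ≤ n) (hq : 0 < q) (hqp : q < p) (hpr : p ≤ r) :
    ∃ C : ℝ, 0 < C ∧ ∀ f : (Fin n → ℝ) → ℝ, Measurable f →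
      morreyNorm n d r q f ≤
        ENNReal.ofReal C *
          ⨆ (a : Fin n → ℝ) (l : ℝ) (_ : 0 < l),
            ENNReal.ofReal (l ^ (d / r - d / p)) *
              weakChoquetLpNorm n d p ((cubeSet n a l).indicator f) := by
  have hp0 : 0 < p := hq.trans hqp
  have hr0 : 0 < r := lt_of_lt_of_le hp0 hpr
  have hβ : 1 < p / q := (one_lt_div hq).2 hqp
  have hbne : p / q - 1 ≠ 0 := sub_ne_zero.2 hβ.ne'
  set c1 : ℝ := 1 + 1 / (p / q - 1) with hc1def
  have hb1 : 0 < p / q - 1 := sub_pos.2 hβ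
  have hc1 : 0 < c1 := by
    have h01 : 0 < 1 / (p / q - 1) := div_pos one_pos hb1
    rw [hc1def]
    linarith
  refine ⟨c1 ^ (1 / q), Real.rpow_pos_of_pos hc1 _, fun f hf => ?_⟩
  unfold morreyNorm morreyNormE
  refine iSup_le fun a => iSup_le fun l => iSup_le fun hl => ?_
  set Q := cubeSet n a l with hQ
  set fQ := Q.indicator f with hfQ
  set A := weakChoquetLpNorm n d p fQ with hA
  set H : ℝ → ℝ≥0∞ := fun s => hContent n d {x | ENNReal.ofReal s < ENNReal.ofReal |fQ x|}
    with hH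
  have hHweak : ∀ s : ℝ, 0 < s → H s ≤ (A / ENNReal.ofReal s) ^ p := fun s hs =>
    hContent_le_of_weak hp0 _ hs
  have hsub : ∀ s : ℝ, 0 < s → {x | ENNReal.ofReal s < ENNReal.ofReal |fQ x|} ⊆ Q := by
    intro s hs x hx
    by_contra hxQ
    rw [Set.mem_setOf_eq, hfQ, Set.indicator_of_notMem hxQ] at hx
    simp at hx
  have hHcube : ∀ s : ℝ, 0 < s → H s ≤ ENNReal.ofReal l ^ d := fun s hs =>
    (hContent_mono (hsub s hs)).trans (hContent_cube_le hd a l)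
  have hCI : choquetIntegral n d (Q.indicator fun x => ENNReal.ofReal |f x| ^ q)
      = ∫⁻ t in Set.Ioi (0:ℝ), H (t ^ (1 / q)) := by
    unfold choquetIntegral
    refine setLIntegral_congr_fun measurableSet_Ioi (fun t ht => ?_)
    have ht0 : 0 < t := ht
    congr 1
    ext x
    by_cases hx : x ∈ Q
    · simp only [Set.mem_setOf_eq, Set.indicator_of_mem hx, hfQ, hH]
      rw [ENNReal.ofReal_rpow_of_nonneg (abs_nonneg _) hq.le,
        ENNReal.ofReal_lt_ofReal_iff_of_nonneg ht0.le,
        ENNReal.ofReal_lt_ofReal_iff_of_nonneg (Real.rpow_nonneg ht0.le _),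
        one_div, Real.rpow_inv_lt_iff_of_pos ht0.le (abs_nonneg _) hq]
    · simp [Set.indicator_of_notMem hx, hfQ, hH]
  have hstep : ENNReal.ofReal (l ^ (d / r - d / q)) *
      (choquetIntegral n d (Q.indicator fun x => ENNReal.ofReal |f x| ^ q)) ^ (1 / q)
      ≤ ENNReal.ofReal (c1 ^ (1 / q)) * (ENNReal.ofReal (l ^ (d / r - d / p)) * A) := by
    by_cases hA0 : A = 0
    · have hzero : ∫⁻ t in Set.Ioi (0:ℝ), H (t ^ (1 / q)) = 0 := by
        refine le_antisymm ?_ (zero_le)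
        calc ∫⁻ t in Set.Ioi (0:ℝ), H (t ^ (1 / q))
            ≤ ∫⁻ _ in Set.Ioi (0:ℝ), (0:ℝ≥0∞) := by
              refine setLIntegral_mono' measurableSet_Ioi fun t ht => ?_
              have ht0 : (0:ℝ) < t := ht
              have := hHweak _ (Real.rpow_pos_of_pos ht0 (1/q))
              simpa [hA0, ENNReal.zero_rpow_of_pos hp0] using this
          _ = 0 := lintegral_zero
      rw [hCI, hzero, one_div, ENNReal.zero_rpow_of_pos (by positivity : (0:ℝ) < q⁻¹),
        mul_zero]
      exact zero_le
    by_cases hAt : A = ⊤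
    · have : ENNReal.ofReal (c1 ^ (1/q)) * (ENNReal.ofReal (l ^ (d / r - d / p)) * A) = ⊤ := by
        rw [hAt, ENNReal.mul_top (ENNReal.ofReal_pos.2 (Real.rpow_pos_of_pos hl _)).ne',
          ENNReal.mul_top (ENNReal.ofReal_pos.2 (Real.rpow_pos_of_pos hc1 _)).ne']
      rw [this]
      exact le_top
    set A0 := A.toReal with hA0def
    have hA0pos : 0 < A0 := ENNReal.toReal_pos hA0 hAt
    have hAeq : A = ENNReal.ofReal A0 := (ENNReal.ofReal_toReal hAt).symm
    set T : ℝ := A0 ^ q * l ^ (-(d * q / p)) with hTdef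
    have hT : 0 < T := by positivity
    set E0 : ℝ := A0 ^ q * l ^ (d - d * q / p) with hE0def
    have hE0 : 0 < E0 := by positivity
    have hid1 : l ^ d * T = E0 := by
      rw [hTdef, hE0def,
        show l ^ d * (A0 ^ q * l ^ (-(d * q / p))) = A0 ^ q * (l ^ d * l ^ (-(d * q / p)))
          from by ring, ← Real.rpow_add hl, sub_eq_add_neg]
    have hid2 : A0 ^ p * T ^ (-(p / q) + 1) = E0 := by
      rw [hTdef, Real.mul_rpow (by positivity) (by positivity),
        ← Real.rpow_mul hA0pos.le, ← Real.rpow_mul hl.le,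
        show A0 ^ p * (A0 ^ (q * (-(p/q) + 1)) * l ^ (-(d*q/p) * (-(p/q) + 1)))
          = (A0 ^ p * A0 ^ (q * (-(p/q) + 1))) * l ^ (-(d*q/p) * (-(p/q) + 1)) from by ring,
        ← Real.rpow_add hA0pos, hE0def]
      have e1 : p + q * (-(p/q) + 1) = q := by field_simp; ring
      have e2 : -(d*q/p) * (-(p/q) + 1) = d - d*q/p := by field_simp; ring
      rw [e1, e2]
    have hsplit : ∫⁻ t in Set.Ioi (0:ℝ), H (t ^ (1 / q)) ≤ ENNReal.ofReal (c1 * E0) := by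
      rw [show Set.Ioi (0:ℝ) = Set.Ioc 0 T ∪ Set.Ioi T from
          (Set.Ioc_union_Ioi_eq_Ioi hT.le).symm,
        lintegral_union measurableSet_Ioi Set.Ioc_disjoint_Ioi_same]
      have h1 : ∫⁻ t in Set.Ioc (0:ℝ) T, H (t ^ (1 / q)) ≤ ENNReal.ofReal (l ^ d * T) := by
        calc ∫⁻ t in Set.Ioc (0:ℝ) T, H (t ^ (1 / q))
            ≤ ∫⁻ _ in Set.Ioc (0:ℝ) T, (ENNReal.ofReal l ^ d) :=
              setLIntegral_mono' measurableSet_Ioc fun t ht =>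
                hHcube _ (Real.rpow_pos_of_pos ht.1 _)
          _ = ENNReal.ofReal l ^ d * ENNReal.ofReal T := by
              rw [setLIntegral_const, Real.volume_Ioc]
              simp
          _ = ENNReal.ofReal (l ^ d * T) := by
              rw [ENNReal.ofReal_rpow_of_pos hl, ← ENNReal.ofReal_mul (by positivity)]
      have h2 : ∫⁻ t in Set.Ioi T, H (t ^ (1 / q)) ≤ ENNReal.ofReal (E0 / (p/q - 1)) := by
        have hbound : ∀ t ∈ Set.Ioi T, H (t ^ (1 / q))
            ≤ ENNReal.ofReal (A0 ^ p * t ^ (-(p/q))) := by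
          intro t ht
          have ht0 : 0 < t := hT.trans ht
          have hs0 : 0 < t ^ (1/q) := Real.rpow_pos_of_pos ht0 _
          refine (hHweak _ hs0).trans ?_
          rw [hAeq, ← ENNReal.ofReal_div_of_pos hs0,
            ENNReal.ofReal_rpow_of_pos (by positivity)]
          refine ENNReal.ofReal_le_ofReal (le_of_eq ?_)
          rw [Real.div_rpow hA0pos.le hs0.le, ← Real.rpow_mul ht0.le,
            show 1/q * p = p/q from by field_simp, div_eq_mul_inv, ← Real.rpow_neg ht0.le]
        calc ∫⁻ t in Set.Ioi T, H (t ^ (1 / q))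
            ≤ ∫⁻ t in Set.Ioi T, ENNReal.ofReal (A0 ^ p * t ^ (-(p/q))) :=
              setLIntegral_mono' measurableSet_Ioi hbound
          _ = ENNReal.ofReal (∫ t in Set.Ioi T, A0 ^ p * t ^ (-(p/q))) := by
              rw [← MeasureTheory.ofReal_integral_eq_lintegral_ofReal]
              · exact (integrableOn_Ioi_rpow_of_lt (by linarith) hT).const_mul _
              · exact (ae_restrict_iff' measurableSet_Ioi).2 (Filter.Eventually.of_forall
                  fun t ht => mul_nonneg (by positivity)
                    (Real.rpow_nonneg (hT.trans ht).le _))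
          _ = ENNReal.ofReal (A0 ^ p * (-T ^ (-(p/q) + 1) / (-(p/q) + 1))) := by
              rw [MeasureTheory.integral_const_mul, integral_Ioi_rpow_of_lt (by linarith) hT]
          _ ≤ ENNReal.ofReal (E0 / (p/q - 1)) := by
              refine ENNReal.ofReal_le_ofReal (le_of_eq ?_)
              rw [show A0 ^ p * (-T ^ (-(p/q) + 1) / (-(p/q) + 1))
                  = (A0 ^ p * T ^ (-(p/q) + 1)) * (-1 / (-(p/q) + 1)) from by ring, hid2,
                show (-1 : ℝ) / (-(p/q) + 1) = 1 / (p/q - 1) from by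
                  rw [show -(p/q) + 1 = -(p/q - 1) from by ring, div_neg, neg_div, neg_neg],
                mul_one_div]
      calc (∫⁻ t in Set.Ioc (0:ℝ) T, H (t ^ (1 / q)))
            + ∫⁻ t in Set.Ioi T, H (t ^ (1 / q))
          ≤ ENNReal.ofReal (l ^ d * T) + ENNReal.ofReal (E0 / (p/q - 1)) := add_le_add h1 h2
        _ = ENNReal.ofReal (l ^ d * T + E0 / (p/q - 1)) :=
            (ENNReal.ofReal_add (by positivity) (div_nonneg hE0.le hb1.le)).symm
        _ = ENNReal.ofReal (c1 * E0) := by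
            rw [hid1]
            congr 1
            rw [hc1def]
            field_simp
    rw [hCI]
    calc ENNReal.ofReal (l ^ (d/r - d/q)) * (∫⁻ t in Set.Ioi (0:ℝ), H (t ^ (1/q))) ^ (1/q)
        ≤ ENNReal.ofReal (l ^ (d/r - d/q)) * (ENNReal.ofReal (c1 * E0)) ^ (1/q) :=
          mul_le_mul_right (ENNReal.rpow_le_rpow hsplit (by positivity)) _
      _ = ENNReal.ofReal (l ^ (d/r - d/q) * (c1 * E0) ^ (1/q)) := by
          rw [ENNReal.ofReal_rpow_of_pos (by positivity), ← ENNReal.ofReal_mul (by positivity)]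
      _ = ENNReal.ofReal (c1 ^ (1/q)) * (ENNReal.ofReal (l ^ (d/r - d/p)) * A) := by
          rw [hAeq, ← ENNReal.ofReal_mul (by positivity), ← ENNReal.ofReal_mul (by positivity)]
          congr 1
          rw [hE0def, Real.mul_rpow hc1.le (by positivity),
            Real.mul_rpow (by positivity) (by positivity),
            ← Real.rpow_mul hA0pos.le, ← Real.rpow_mul hl.le,
            show q * (1/q) = 1 from by field_simp, Real.rpow_one,
            show l ^ (d/r - d/q) * (c1 ^ (1/q) * (A0 * l ^ ((d - d*q/p) * (1/q))))
              = c1 ^ (1/q) * (l ^ (d/r - d/q) * l ^ ((d - d*q/p) * (1/q)) * A0) from by ring,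
            ← Real.rpow_add hl,
            show d/r - d/q + (d - d*q/p) * (1/q) = d/r - d/p from by field_simp; ring]
  refine hstep.trans (mul_le_mul_right ?_ _)
  exact le_iSup_of_le a (le_iSup_of_le l (le_iSup_of_le hl le_rfl))

end
end

section
/- Let n ∈ ℕ, 0 < d ≤ n, and 0 < q ≤ r ≤ p < ∞. Then there is a constant C > 0 (independent of f) such that for every measurable function f on ℝ^n, ‖f‖_{M^p_q(H^d)} ≤ C ‖f‖_{M^p_r(H^d)}. -/
open MeasureTheory Set ENNReal

noncomputable section

section Aux

lemma cheb {n : ℕ} {d r s : ℝ} (hr : 0 < r) (hs : 0 < s)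
    (Q : Set (Fin n → ℝ)) (f : (Fin n → ℝ) → ℝ) :
    ENNReal.ofReal (s ^ r) * hContent n d (Q ∩ {x | s < |f x|}) ≤
      choquetIntegral n d (Q.indicator fun x => ENNReal.ofReal |f x| ^ r) := by
  have hsr : 0 < s ^ r := Real.rpow_pos_of_pos hs r
  have h1 : ∀ t ∈ Set.Ioo (0:ℝ) (s ^ r),
      hContent n d (Q ∩ {x | s < |f x|}) ≤
      hContent n d {x | ENNReal.ofReal t <
        Q.indicator (fun x => ENNReal.ofReal |f x| ^ r) x} := by
    intro t ht
    refine hContent_mono fun x hx => ?_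
    have hle : ENNReal.ofReal (s ^ r) ≤ ENNReal.ofReal |f x| ^ r := by
      rw [← ENNReal.ofReal_rpow_of_pos hs]
      exact ENNReal.rpow_le_rpow (ENNReal.ofReal_le_ofReal hx.2.le) hr.le
    have ht' : ENNReal.ofReal t < ENNReal.ofReal (s ^ r) :=
      (ENNReal.ofReal_lt_ofReal_iff hsr).2 ht.2
    show ENNReal.ofReal t < Q.indicator _ x
    rw [Set.indicator_of_mem hx.1]
    exact lt_of_lt_of_le ht' hle
  calc ENNReal.ofReal (s ^ r) * hContent n d (Q ∩ {x | s < |f x|})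
      = ∫⁻ _ in Set.Ioo (0:ℝ) (s ^ r), hContent n d (Q ∩ {x | s < |f x|}) := by
        rw [setLIntegral_const, Real.volume_Ioo, sub_zero, mul_comm]
    _ ≤ ∫⁻ t in Set.Ioo (0:ℝ) (s ^ r),
          hContent n d {x | ENNReal.ofReal t <
            Q.indicator (fun x => ENNReal.ofReal |f x| ^ r) x} :=
        setLIntegral_mono' measurableSet_Ioo h1
    _ ≤ choquetIntegral n d (Q.indicator fun x => ENNReal.ofReal |f x| ^ r) :=
        lintegral_mono_set Set.Ioo_subset_Ioi_self

lemma level_subset {n : ℕ} {q t : ℝ} (hq : 0 < q) (ht : 0 < t)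
    (Q : Set (Fin n → ℝ)) (f : (Fin n → ℝ) → ℝ) :
    {x | ENNReal.ofReal t < Q.indicator (fun x => ENNReal.ofReal |f x| ^ q) x} ⊆
      Q ∩ {x | t ^ (1/q) < |f x|} := by
  intro x hx
  simp only [Set.mem_setOf_eq] at hx
  have hxQ : x ∈ Q := by
    by_contra h
    rw [Set.indicator_of_notMem h] at hx
    exact ENNReal.not_lt_zero hx
  rw [Set.indicator_of_mem hxQ] at hx
  refine ⟨hxQ, ?_⟩
  have h1 : ENNReal.ofReal t < ENNReal.ofReal (|f x| ^ q) := by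
    rwa [← ENNReal.ofReal_rpow_of_nonneg (abs_nonneg _) hq.le]
  have h2 : t < |f x| ^ q := (ENNReal.ofReal_lt_ofReal_iff_of_nonneg ht.le).1 h1
  calc t ^ (1/q) < (|f x| ^ q) ^ (1/q) :=
        Real.rpow_lt_rpow ht.le h2 (by positivity)
    _ = |f x| := by
        rw [← Real.rpow_mul (abs_nonneg _), mul_one_div_cancel hq.ne', Real.rpow_one]

end Aux

/-- (M4): `𝓜^p_r(H^d) ↪ 𝓜^p_q(H^d)` for `0 < q ≤ r ≤ p < ∞`. -/
theorem morrey_inclusion (n : ℕ) (d p q r : ℝ)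
    (hd : 0 < d) (hdn : d ≤ n) (hq : 0 < q) (hqr : q ≤ r) (hrp : r ≤ p) :
    ∃ C : ℝ, 0 < C ∧ ∀ f : (Fin n → ℝ) → ℝ, Measurable f →
      morreyNorm n d p q f ≤ ENNReal.ofReal C * morreyNorm n d p r f := by
  rcases eq_or_lt_of_le hqr with heq | hqr'
  · subst heq
    exact ⟨1, one_pos, fun f _ => by simp⟩
  have hr : 0 < r := hq.trans hqr'
  have hrq : 0 < r - q := by linarith
  set C := (r / (r - q)) ^ (1/q) with hCdef
  have hCpos : 0 < C := Real.rpow_pos_of_pos (by positivity) _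
  refine ⟨C, hCpos, fun f _ => ?_⟩
  rw [morreyNorm, morreyNormE]
  refine iSup_le fun a => iSup_le fun l => iSup_le fun hl => ?_
  set Q := cubeSet n a l with hQdef
  set A := choquetIntegral n d (Q.indicator fun x => ENNReal.ofReal |f x| ^ r) with hAdef
  have hRHS : ENNReal.ofReal (l ^ (d/p - d/r)) * A ^ (1/r) ≤ morreyNorm n d p r f := by
    rw [morreyNorm, morreyNormE]
    exact le_iSup_of_le a (le_iSup_of_le l (le_iSup_of_le hl le_rfl))
  have hlne : (ENNReal.ofReal (l ^ (d/p - d/r))) ≠ 0 :=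
    (ENNReal.ofReal_pos.2 (Real.rpow_pos_of_pos hl _)).ne'
  by_cases hAtop : A = ⊤
  · have h1 : morreyNorm n d p r f = ⊤ := by
      refine top_le_iff.1 (le_trans ?_ hRHS)
      rw [hAtop, ENNReal.top_rpow_of_pos (by positivity : (0:ℝ) < 1/r),
        ENNReal.mul_top hlne]
    rw [h1, ENNReal.mul_top (ENNReal.ofReal_pos.2 hCpos).ne']
    exact le_top
  -- Chebyshev bound for the q-level sets
  have hcheb : ∀ t : ℝ, 0 < t →
      hContent n d {x | ENNReal.ofReal t <
          Q.indicator (fun x => ENNReal.ofReal |f x| ^ q) x} ≤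
        A * (ENNReal.ofReal t ^ (r/q))⁻¹ := by
    intro t ht
    have hmono := hContent_mono (d := d) (level_subset hq ht Q f)
    have hs : 0 < t ^ (1/q) := Real.rpow_pos_of_pos ht _
    have h2 := cheb (n := n) (d := d) hr hs Q f
    have key : ENNReal.ofReal ((t ^ (1/q)) ^ r) = ENNReal.ofReal t ^ (r/q) := by
      rw [← Real.rpow_mul ht.le, one_div_mul_eq_div, ENNReal.ofReal_rpow_of_pos ht]
    rw [key] at h2
    have hb0 : (ENNReal.ofReal t ^ (r/q)) ≠ 0 :=
      (ENNReal.rpow_pos (ENNReal.ofReal_pos.2 ht) ENNReal.ofReal_ne_top).ne'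
    have hbtop : (ENNReal.ofReal t ^ (r/q)) ≠ ⊤ :=
      ENNReal.rpow_ne_top_of_nonneg (by positivity) ENNReal.ofReal_ne_top
    refine hmono.trans ?_
    rw [← div_eq_mul_inv, ENNReal.le_div_iff_mul_le (Or.inl hb0) (Or.inl hbtop)]
    rw [mul_comm]; exact h2
  have hGL : ∀ t : ℝ, 0 < t →
      hContent n d {x | ENNReal.ofReal t <
          Q.indicator (fun x => ENNReal.ofReal |f x| ^ q) x} ≤
        ENNReal.ofReal (l ^ d) := by
    intro t ht
    refine (hContent_mono ((level_subset hq ht Q f).trans Set.inter_subset_left)).trans ?_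
    have h := hContent_cube_le (n := n) hd a l
    rwa [ENNReal.ofReal_rpow_of_pos hl] at h
  by_cases hA0 : A = 0
  · have hzero : choquetIntegral n d (Q.indicator fun x => ENNReal.ofReal |f x| ^ q) = 0 := by
      rw [choquetIntegral]
      have h1 : ∫⁻ t in Set.Ioi (0:ℝ),
          hContent n d {x | ENNReal.ofReal t <
            Q.indicator (fun x => ENNReal.ofReal |f x| ^ q) x} =
          ∫⁻ _ in Set.Ioi (0:ℝ), (0:ℝ≥0∞) := by
        refine setLIntegral_congr_fun measurableSet_Ioi (fun t ht => ?_)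
        refine le_antisymm ?_ (zero_le)
        have h2 := hcheb t ht
        rwa [hA0, zero_mul] at h2
      rw [h1, lintegral_zero]
    rw [hzero, ENNReal.zero_rpow_of_pos (by positivity), mul_zero]
    exact zero_le
  -- main case: 0 < A < ∞
  set α := A.toReal with hαdef
  have hα : 0 < α := ENNReal.toReal_pos hA0 hAtop
  have hAα : A = ENNReal.ofReal α := (ENNReal.ofReal_toReal hAtop).symm
  set L := l ^ d with hLdef
  have hL : 0 < L := Real.rpow_pos_of_pos hl d
  set ρ := r / q with hρdef
  have hρ : 1 < ρ := (one_lt_div hq).2 hqr'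
  set t0 := (α / L) ^ (q/r) with ht0def
  have ht0 : 0 < t0 := Real.rpow_pos_of_pos (by positivity) _
  have hsplit : choquetIntegral n d (Q.indicator fun x => ENNReal.ofReal |f x| ^ q) ≤
      ENNReal.ofReal (L * t0) + ENNReal.ofReal (α * (t0 ^ (1 - ρ) / (ρ - 1))) := by
    rw [choquetIntegral, ← Set.Ioc_union_Ioi_eq_Ioi ht0.le,
      lintegral_union measurableSet_Ioi Set.Ioc_disjoint_Ioi_same]
    refine add_le_add ?_ ?_
    · calc ∫⁻ t in Set.Ioc 0 t0,
            hContent n d {x | ENNReal.ofReal t <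
              Q.indicator (fun x => ENNReal.ofReal |f x| ^ q) x}
          ≤ ∫⁻ _ in Set.Ioc 0 t0, ENNReal.ofReal L :=
            setLIntegral_mono' measurableSet_Ioc fun t ht => hGL t ht.1
        _ = ENNReal.ofReal L * ENNReal.ofReal t0 := by
            rw [setLIntegral_const, Real.volume_Ioc, sub_zero]
        _ = ENNReal.ofReal (L * t0) := (ENNReal.ofReal_mul hL.le).symm
    · have hint : ∫⁻ t in Set.Ioi t0, (ENNReal.ofReal t ^ ρ)⁻¹ =
          ENNReal.ofReal (t0 ^ (1 - ρ) / (ρ - 1)) := by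
        have h1 : ∫⁻ t in Set.Ioi t0, (ENNReal.ofReal t ^ ρ)⁻¹ =
            ∫⁻ t in Set.Ioi t0, ENNReal.ofReal (t ^ (-ρ)) := by
          refine setLIntegral_congr_fun measurableSet_Ioi (fun t ht => ?_)
          rw [← ENNReal.rpow_neg, ENNReal.ofReal_rpow_of_pos (ht0.trans ht)]
        rw [h1, ← ofReal_integral_eq_lintegral_ofReal
            (integrableOn_Ioi_rpow_of_lt (by linarith) ht0)
            (ae_restrict_of_forall_mem measurableSet_Ioi fun t ht =>
              Real.rpow_nonneg (ht0.trans ht).le _),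
          integral_Ioi_rpow_of_lt (by linarith) ht0]
        congr 1
        have he : (-ρ + 1 : ℝ) = 1 - ρ := by ring
        rw [he, div_eq_div_iff (by linarith) (by linarith : (ρ - 1 : ℝ) ≠ 0)]
        ring
      calc ∫⁻ t in Set.Ioi t0,
            hContent n d {x | ENNReal.ofReal t <
              Q.indicator (fun x => ENNReal.ofReal |f x| ^ q) x}
          ≤ ∫⁻ t in Set.Ioi t0, A * (ENNReal.ofReal t ^ ρ)⁻¹ :=
            setLIntegral_mono' measurableSet_Ioi fun t ht => hcheb t (ht0.trans ht)
        _ = A * ∫⁻ t in Set.Ioi t0, (ENNReal.ofReal t ^ ρ)⁻¹ :=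
            lintegral_const_mul' _ _ hAtop
        _ = ENNReal.ofReal (α * (t0 ^ (1 - ρ) / (ρ - 1))) := by
            rw [hint, hAα, ← ENNReal.ofReal_mul hα.le]
  -- key real identity
  have hkey : α * t0 ^ (1 - ρ) = L * t0 := by
    have hmul : (q/r) * (-ρ) = -1 := by
      rw [hρdef]; field_simp
    have h1 : t0 ^ (1 - ρ) = t0 * (L / α) := by
      rw [show (1 - ρ : ℝ) = 1 + (-ρ) by ring, Real.rpow_add ht0, Real.rpow_one]
      congr 1
      rw [ht0def, ← Real.rpow_mul (by positivity), hmul, Real.rpow_neg_one, inv_div]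
    rw [h1]
    field_simp
  have hK : L * t0 + α * (t0 ^ (1 - ρ) / (ρ - 1)) = L * t0 * (r / (r - q)) := by
    rw [← mul_div_assoc, hkey]
    have hρ1 : ρ - 1 = (r - q) / q := by rw [hρdef]; field_simp
    rw [hρ1]
    field_simp
    ring
  have hsplit' : choquetIntegral n d (Q.indicator fun x => ENNReal.ofReal |f x| ^ q) ≤
      ENNReal.ofReal (L * t0 * (r / (r - q))) := by
    refine hsplit.trans ?_
    rw [← ENNReal.ofReal_add (by positivity)
      (mul_nonneg hα.le (div_nonneg (Real.rpow_nonneg ht0.le _) (by linarith))), hK]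
  -- final real computation
  have h4 : l ^ (d/p - d/q) * l ^ (d/q - d/r) = l ^ (d/p - d/r) := by
    rw [← Real.rpow_add hl]; ring_nf
  have h2 : L * t0 = α ^ (q/r) * l ^ (d - d * (q/r)) := by
    rw [ht0def, Real.div_rpow hα.le hL.le, hLdef, ← Real.rpow_mul hl.le,
      Real.rpow_sub hl]
    rw [mul_div_assoc']
    ring
  have h3 : (L * t0) ^ (1/q) = α ^ (1/r) * l ^ (d/q - d/r) := by
    rw [h2, Real.mul_rpow (by positivity) (by positivity), ← Real.rpow_mul hα.le,
      ← Real.rpow_mul hl.le]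
    congr 2
    · field_simp
    · field_simp
  have hreal : l ^ (d/p - d/q) * (L * t0 * (r / (r - q))) ^ (1/q) =
      C * (l ^ (d/p - d/r) * α ^ (1/r)) := by
    rw [Real.mul_rpow (by positivity) (by positivity), h3, ← h4, hCdef]
    ring
  calc ENNReal.ofReal (l ^ (d/p - d/q)) *
        (choquetIntegral n d (Q.indicator fun x => ENNReal.ofReal |f x| ^ q)) ^ (1/q)
      ≤ ENNReal.ofReal (l ^ (d/p - d/q)) *
        (ENNReal.ofReal (L * t0 * (r / (r - q)))) ^ (1/q) :=
        mul_le_mul_right (ENNReal.rpow_le_rpow hsplit' (by positivity)) _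
    _ = ENNReal.ofReal (l ^ (d/p - d/q) * (L * t0 * (r / (r - q))) ^ (1/q)) := by
        rw [ENNReal.ofReal_rpow_of_pos (by positivity),
          ← ENNReal.ofReal_mul (by positivity)]
    _ = ENNReal.ofReal (C * (l ^ (d/p - d/r) * α ^ (1/r))) := by rw [hreal]
    _ = ENNReal.ofReal C * (ENNReal.ofReal (l ^ (d/p - d/r)) * A ^ (1/r)) := by
        rw [ENNReal.ofReal_mul hCpos.le, ENNReal.ofReal_mul (by positivity), hAα,
          ENNReal.ofReal_rpow_of_pos hα]
    _ ≤ ENNReal.ofReal C * morreyNorm n d p r f := mul_le_mul_right hRHS _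

end
end

section
/- Let n ∈ ℕ, 0 < d ≤ n, θ ≥ 1 with θd ≤ n, and 0 < q ≤ p < ∞. Then for every measurable function f on ℝ^n, ‖f‖_{M^{θp}_{θq}(H^{θd})} ≤ θ ‖f‖_{M^p_q(H^d)}. -/
open MeasureTheory Set ENNReal

noncomputable section

namespace MorreyAux

lemma tsum_rpow_le {θ : ℝ} (hθ : 1 ≤ θ) (a : ℕ → ℝ≥0∞) :
    ∑' j, a j ^ θ ≤ (∑' j, a j) ^ θ := by
  have hθ0 : 0 < θ := lt_of_lt_of_le one_pos hθ
  calc ∑' j, a j ^ θ = ⨆ s : Finset ℕ, ∑ j ∈ s, a j ^ θ := ENNReal.tsum_eq_iSup_sum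
    _ ≤ (∑' j, a j) ^ θ := by
        refine iSup_le fun s => le_trans ?_
          (ENNReal.rpow_le_rpow (ENNReal.sum_le_tsum s) hθ0.le)
        classical
        induction s using Finset.induction with
        | empty => simp [ENNReal.zero_rpow_of_pos hθ0]
        | @insert j s hj ih =>
            rw [Finset.sum_insert hj, Finset.sum_insert hj]
            exact le_trans (add_le_add_right ih _) (ENNReal.add_rpow_le_rpow_add _ _ hθ)

lemma hContent_mono {n : ℕ} {d : ℝ} {E E' : Set (Fin n → ℝ)} (h : E ⊆ E') :
    hContent n d E ≤ hContent n d E' := by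
  refine le_iInf fun c => le_iInf fun hc => ?_
  exact iInf₂_le c (h.trans hc)

lemma hContent_rpow_le {n : ℕ} {d θ : ℝ} (hθ : 1 ≤ θ) (E : Set (Fin n → ℝ)) :
    hContent n (θ * d) E ≤ hContent n d E ^ θ := by
  have hθ0 : 0 < θ := lt_of_lt_of_le one_pos hθ
  rcases eq_top_or_lt_top (hContent n d E) with htop | hlt
  · rw [htop, ENNReal.top_rpow_of_pos hθ0]; exact le_top
  have main : ∀ ε : ℝ≥0∞, 0 < ε → hContent n (θ * d) E ≤ (hContent n d E + ε) ^ θ := by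
    intro ε hε
    have h1 : hContent n d E < hContent n d E + ε := ENNReal.lt_add_right hlt.ne hε.ne'
    conv_lhs at h1 => rw [hContent]
    obtain ⟨c, hc⟩ := iInf_lt_iff.mp h1
    obtain ⟨hcov, hsum⟩ := iInf_lt_iff.mp hc
    calc hContent n (θ * d) E ≤ ∑' j, ENNReal.ofReal ((c j).2) ^ (θ * d) := iInf₂_le c hcov
      _ = ∑' j, (ENNReal.ofReal ((c j).2) ^ d) ^ θ := by
          refine tsum_congr fun j => ?_
          rw [mul_comm, ENNReal.rpow_mul]
      _ ≤ (∑' j, ENNReal.ofReal ((c j).2) ^ d) ^ θ := tsum_rpow_le hθ _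
      _ ≤ (hContent n d E + ε) ^ θ := ENNReal.rpow_le_rpow hsum.le hθ0.le
  refine ge_of_tendsto (x := nhdsWithin 0 (Set.Ioi (0:ℝ≥0∞))) ?_
    (eventually_nhdsWithin_of_forall fun ε hε => main ε hε)
  have t1 : Filter.Tendsto (fun ε : ℝ≥0∞ => hContent n d E + ε) (nhds 0)
      (nhds (hContent n d E)) := by
    have := (tendsto_const_nhds (x := hContent n d E)
      (f := nhds (0:ℝ≥0∞))).add (Filter.tendsto_id (x := nhds (0:ℝ≥0∞)))
    simpa using this
  exact (ENNReal.continuous_rpow_const.tendsto _).comp (t1.mono_left nhdsWithin_le_nhds)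

lemma volume_ofReal_lt {c : ℝ≥0∞} :
    volume ({v : ℝ | ENNReal.ofReal v < c} ∩ Set.Ioi 0) = c := by
  rcases eq_top_or_lt_top c with rfl | hc
  · have hs : {v : ℝ | ENNReal.ofReal v < ⊤} ∩ Set.Ioi 0 = Set.Ioi (0:ℝ) := by
      simp [Set.inter_eq_right.mpr]
    rw [hs, Real.volume_Ioi]
  · have hs : {v : ℝ | ENNReal.ofReal v < c} ∩ Set.Ioi 0 = Set.Ioo 0 c.toReal := by
      ext v
      simp only [Set.mem_inter_iff, Set.mem_setOf_eq, Set.mem_Ioi, Set.mem_Ioo]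
      constructor
      · rintro ⟨h1, h2⟩
        exact ⟨h2, (ENNReal.ofReal_lt_iff_lt_toReal h2.le hc.ne).mp h1⟩
      · rintro ⟨h2, h1⟩
        exact ⟨(ENNReal.ofReal_lt_iff_lt_toReal h2.le hc.ne).mpr h1, h2⟩
    rw [hs, Real.volume_Ioo, sub_zero, ENNReal.ofReal_toReal hc.ne]



lemma volume_rpow_level_le {θ : ℝ} (hθ0 : 0 < θ) {F : ℝ → ℝ≥0∞} (hF : Antitone F) (c : ℝ≥0∞) :
    volume ({t : ℝ | c < F (t ^ (1/θ))} ∩ Set.Ioi 0)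
      ≤ (volume ({s : ℝ | c < F s} ∩ Set.Ioi 0)) ^ θ := by
  set S := {s : ℝ | c < F s} ∩ Set.Ioi 0 with hS
  have hdc : ∀ s ∈ S, ∀ x, 0 < x → x ≤ s → x ∈ S := by
    intro s hs x hx hxs
    exact ⟨lt_of_lt_of_le hs.1 (hF hxs), hx⟩
  by_cases hne : S.Nonempty
  · by_cases hbdd : BddAbove S
    · have hb0 : 0 ≤ sSup S := le_trans hne.choose_spec.2.le (le_csSup hbdd hne.choose_spec)
      have hT : {t : ℝ | c < F (t ^ (1/θ))} ∩ Set.Ioi 0 ⊆ Set.Ioc 0 (sSup S ^ θ) := by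
        rintro t ⟨ht1, ht2⟩
        refine ⟨ht2, ?_⟩
        have hmem : t ^ (1/θ) ∈ S := ⟨ht1, Real.rpow_pos_of_pos ht2 _⟩
        have hle : t ^ (1/θ) ≤ sSup S := le_csSup hbdd hmem
        calc t = (t ^ (1/θ)) ^ θ := by
              rw [← Real.rpow_mul (le_of_lt ht2), one_div,
                inv_mul_cancel₀ hθ0.ne', Real.rpow_one]
          _ ≤ sSup S ^ θ := Real.rpow_le_rpow (Real.rpow_nonneg ht2.le _) hle hθ0.le
      have hIoo : Set.Ioo 0 (sSup S) ⊆ S := by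
        intro x hx
        obtain ⟨s, hsS, hxs⟩ := exists_lt_of_lt_csSup hne hx.2
        exact hdc s hsS x hx.1 hxs.le
      calc volume ({t : ℝ | c < F (t ^ (1/θ))} ∩ Set.Ioi 0)
          ≤ volume (Set.Ioc 0 (sSup S ^ θ)) := measure_mono hT
        _ = ENNReal.ofReal (sSup S ^ θ) := by rw [Real.volume_Ioc, sub_zero]
        _ = ENNReal.ofReal (sSup S) ^ θ := (ENNReal.ofReal_rpow_of_nonneg hb0 hθ0.le).symm
        _ ≤ volume S ^ θ := by
            refine ENNReal.rpow_le_rpow ?_ hθ0.le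
            calc ENNReal.ofReal (sSup S) = volume (Set.Ioo 0 (sSup S)) := by
                  rw [Real.volume_Ioo, sub_zero]
              _ ≤ volume S := measure_mono hIoo
    · have hSS : Set.Ioi (0:ℝ) ⊆ S := by
        intro x hx
        obtain ⟨s, hsS, hxs⟩ := not_bddAbove_iff.mp hbdd x
        exact hdc s hsS x hx hxs.le
      have hvol : volume S = ⊤ := top_le_iff.mp (by
        rw [← Real.volume_Ioi (a := (0:ℝ))]; exact measure_mono hSS)
      rw [hvol, ENNReal.top_rpow_of_pos hθ0]
      exact le_top
  · have hT : {t : ℝ | c < F (t ^ (1/θ))} ∩ Set.Ioi 0 = ∅ := by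
      rw [Set.eq_empty_iff_forall_notMem]
      rintro t ⟨ht1, ht2⟩
      exact hne ⟨t ^ (1/θ), ht1, Real.rpow_pos_of_pos ht2 _⟩
    rw [hT]
    simp


lemma key_ineq {θ : ℝ} (hθ : 1 ≤ θ) {F : ℝ → ℝ≥0∞} (hF : Antitone F) :
    ∫⁻ t in Set.Ioi (0:ℝ), F (t ^ (1/θ)) ^ θ ≤ (∫⁻ s in Set.Ioi (0:ℝ), F s) ^ θ := by
  rcases eq_or_lt_of_le hθ with rfl | hθ1
  · simp
  have hθ0 : 0 < θ := lt_trans one_pos hθ1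
  have hFm : Measurable F := hF.measurable
  have hum : Measurable (fun t : ℝ => F (t ^ (1/θ))) :=
    hFm.comp (Real.continuous_rpow_const (by positivity)).measurable
  -- the function λ
  set lam : ℝ → ℝ≥0∞ := fun v => volume ({s : ℝ | ENNReal.ofReal v < F s} ∩ Set.Ioi 0) with hlam
  -- ∫ λ = A
  have hlamint : ∫⁻ v in Set.Ioi (0:ℝ), lam v = ∫⁻ s in Set.Ioi (0:ℝ), F s := by
    have hSm : MeasurableSet {p : ℝ × ℝ | ENNReal.ofReal p.1 < F p.2} :=
      measurableSet_lt (ENNReal.measurable_ofReal.comp measurable_fst) (hFm.comp measurable_snd)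
    have swap := lintegral_lintegral_swap (μ := volume.restrict (Set.Ioi (0:ℝ)))
      (ν := volume.restrict (Set.Ioi (0:ℝ)))
      (f := fun v s => {p : ℝ × ℝ | ENNReal.ofReal p.1 < F p.2}.indicator 1 (v, s))
      ((measurable_const.indicator hSm).aemeasurable)
    calc ∫⁻ v in Set.Ioi (0:ℝ), lam v
        = ∫⁻ v in Set.Ioi (0:ℝ), ∫⁻ s in Set.Ioi (0:ℝ),
            {p : ℝ × ℝ | ENNReal.ofReal p.1 < F p.2}.indicator 1 (v, s) := by
          refine lintegral_congr fun v => ?_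
          have hpt : ∀ s : ℝ, ({p : ℝ × ℝ | ENNReal.ofReal p.1 < F p.2}.indicator 1 (v, s) : ℝ≥0∞)
              = {s : ℝ | ENNReal.ofReal v < F s}.indicator 1 s := by
            intro s
            simp only [Set.indicator_apply, Set.mem_setOf_eq, Pi.one_apply]
          simp_rw [hpt]
          rw [lintegral_indicator_one (measurableSet_lt measurable_const hFm),
            Measure.restrict_apply (measurableSet_lt measurable_const hFm)]
      _ = ∫⁻ s in Set.Ioi (0:ℝ), ∫⁻ v in Set.Ioi (0:ℝ),
            {p : ℝ × ℝ | ENNReal.ofReal p.1 < F p.2}.indicator 1 (v, s) := swap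
      _ = ∫⁻ s in Set.Ioi (0:ℝ), F s := by
          refine lintegral_congr fun s => ?_
          have hpt : ∀ v : ℝ, ({p : ℝ × ℝ | ENNReal.ofReal p.1 < F p.2}.indicator 1 (v, s) : ℝ≥0∞)
              = {v : ℝ | ENNReal.ofReal v < F s}.indicator 1 v := by
            intro v
            simp only [Set.indicator_apply, Set.mem_setOf_eq, Pi.one_apply]
          simp_rw [hpt]
          rw [lintegral_indicator_one (measurableSet_lt ENNReal.measurable_ofReal measurable_const),
            Measure.restrict_apply (measurableSet_lt ENNReal.measurable_ofReal measurable_const),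
            volume_ofReal_lt]
  -- the truncated bound
  have main : ∀ k : ℕ, ∫⁻ t in Set.Ioo (0:ℝ) k, (min (F (t ^ (1/θ))) k) ^ θ
      ≤ (∫⁻ s in Set.Ioi (0:ℝ), F s) ^ θ := by
    intro k
    set m : ℝ → ℝ≥0∞ := fun t => min (F (t ^ (1/θ))) k with hm
    have hmm : Measurable m := hum.min measurable_const
    have hmk : ∀ t, m t ≤ (k : ℝ≥0∞) := fun t => min_le_right _ _
    have hmtop : ∀ t, m t ≠ ⊤ := fun t => ((hmk t).trans_lt (ENNReal.natCast_lt_top k)).ne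
    set W := ∫⁻ t in Set.Ioo (0:ℝ) k, m t ^ θ with hW
    have hWtop : W ≠ ⊤ := by
      have h1 : W ≤ (k:ℝ≥0∞) ^ θ * volume (Set.Ioo (0:ℝ) k) := by
        rw [hW, ← setLIntegral_const]
        exact lintegral_mono fun t => ENNReal.rpow_le_rpow (hmk t) hθ0.le
      refine ne_top_of_le_ne_top ?_ h1
      exact ENNReal.mul_ne_top (ENNReal.rpow_ne_top_of_nonneg hθ0.le (ENNReal.natCast_ne_top k))
        (by rw [Real.volume_Ioo]; exact ENNReal.ofReal_ne_top)
    have hθm1 : (0:ℝ) ≤ θ - 1 := by linarith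
    -- measurability of the product kernel
    have hSm2 : MeasurableSet {p : ℝ × ℝ | ENNReal.ofReal p.2 < m p.1} :=
      measurableSet_lt (ENNReal.measurable_ofReal.comp measurable_snd) (hmm.comp measurable_fst)
    -- W as double integral
    have hwm : W = ∫⁻ t in Set.Ioo (0:ℝ) k, ∫⁻ v in Set.Ioi (0:ℝ),
        m t ^ (θ - 1) * {p : ℝ × ℝ | ENNReal.ofReal p.2 < m p.1}.indicator 1 (t, v) := by
      refine lintegral_congr fun t => ?_
      rw [lintegral_const_mul' _ _ (ENNReal.rpow_ne_top_of_nonneg hθm1 (hmtop t))]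
      have hpt : ∀ v : ℝ, ({p : ℝ × ℝ | ENNReal.ofReal p.2 < m p.1}.indicator 1 (t, v) : ℝ≥0∞)
          = {v : ℝ | ENNReal.ofReal v < m t}.indicator 1 v := by
        intro v; simp only [Set.indicator_apply, Set.mem_setOf_eq, Pi.one_apply]
      simp_rw [hpt]
      rw [lintegral_indicator_one (measurableSet_lt ENNReal.measurable_ofReal measurable_const),
        Measure.restrict_apply (measurableSet_lt ENNReal.measurable_ofReal measurable_const),
        volume_ofReal_lt]
      rw [show θ = (θ - 1) + 1 by ring, ENNReal.rpow_add_of_nonneg _ _ hθm1 zero_le_one,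
        ENNReal.rpow_one]
      ring_nf
    -- swap
    have hswap : ∫⁻ t in Set.Ioo (0:ℝ) k, ∫⁻ v in Set.Ioi (0:ℝ),
        m t ^ (θ - 1) * {p : ℝ × ℝ | ENNReal.ofReal p.2 < m p.1}.indicator 1 (t, v)
        = ∫⁻ v in Set.Ioi (0:ℝ), ∫⁻ t in Set.Ioo (0:ℝ) k,
            m t ^ (θ - 1) * {p : ℝ × ℝ | ENNReal.ofReal p.2 < m p.1}.indicator 1 (t, v) := by
      refine lintegral_lintegral_swap ?_
      refine Measurable.aemeasurable ?_
      exact ((ENNReal.continuous_rpow_const.measurable).comp (hmm.comp measurable_fst)).mul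
        (measurable_const.indicator hSm2)
    -- conjugate exponents
    have hne1 : θ - 1 ≠ 0 := ne_of_gt (by linarith)
    have hconj : (θ/(θ-1)).HolderConjugate θ := by
      exact ((Real.holderConjugate_iff_eq_conjExponent hθ1).mpr rfl).symm
    -- per-v Hölder bound
    have hv : ∀ v : ℝ, (∫⁻ t in Set.Ioo (0:ℝ) k,
        m t ^ (θ - 1) * {p : ℝ × ℝ | ENNReal.ofReal p.2 < m p.1}.indicator 1 (t, v))
        ≤ W ^ ((θ-1)/θ) * lam v := by
      intro v
      have hg : Measurable fun t : ℝ => ({t' : ℝ | ENNReal.ofReal v < m t'}.indicator 1 t : ℝ≥0∞) :=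
        measurable_const.indicator (measurableSet_lt measurable_const hmm)
      have hold := ENNReal.lintegral_mul_le_Lp_mul_Lq (volume.restrict (Set.Ioo (0:ℝ) k)) hconj
        (f := fun t => m t ^ (θ - 1))
        (g := fun t => {t' : ℝ | ENNReal.ofReal v < m t'}.indicator 1 t)
        ((ENNReal.continuous_rpow_const.measurable.comp hmm).aemeasurable) hg.aemeasurable
      have heq1 : (∫⁻ t in Set.Ioo (0:ℝ) k, (m t ^ (θ-1)) ^ (θ/(θ-1))) ^ (1/(θ/(θ-1)))
          = W ^ ((θ-1)/θ) := by
        rw [one_div_div]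
        congr 1
        refine lintegral_congr fun t => ?_
        rw [← ENNReal.rpow_mul]
        congr 1
        field_simp
      have heq2 : (∫⁻ t in Set.Ioo (0:ℝ) k,
          ({t' : ℝ | ENNReal.ofReal v < m t'}.indicator 1 t : ℝ≥0∞) ^ θ) ^ (1/θ) ≤ lam v := by
        have hind : ∀ t : ℝ, (({t' : ℝ | ENNReal.ofReal v < m t'}.indicator 1 t : ℝ≥0∞)) ^ θ
            = {t' : ℝ | ENNReal.ofReal v < m t'}.indicator 1 t := by
          intro t
          simp only [Set.indicator_apply]
          split
          · simp
          · simp [ENNReal.zero_rpow_of_pos hθ0]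
        simp_rw [hind]
        rw [lintegral_indicator_one (measurableSet_lt measurable_const hmm),
          Measure.restrict_apply (measurableSet_lt measurable_const hmm)]
        have hsub : {t' : ℝ | ENNReal.ofReal v < m t'} ∩ Set.Ioo (0:ℝ) k
            ⊆ {t : ℝ | ENNReal.ofReal v < F (t ^ (1/θ))} ∩ Set.Ioi 0 := by
          rintro t ⟨ht1, ht2⟩
          refine ⟨?_, ht2.1⟩
          show ENNReal.ofReal v < F (t ^ (1/θ))
          exact lt_of_lt_of_le ht1 (min_le_left (F (t ^ (1/θ))) (k:ℝ≥0∞))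
        calc (volume ({t' : ℝ | ENNReal.ofReal v < m t'} ∩ Set.Ioo (0:ℝ) k)) ^ (1/θ)
            ≤ (volume ({t : ℝ | ENNReal.ofReal v < F (t ^ (1/θ))} ∩ Set.Ioi 0)) ^ (1/θ) :=
              ENNReal.rpow_le_rpow (measure_mono hsub) (by positivity)
          _ ≤ ((lam v) ^ θ) ^ (1/θ) :=
              ENNReal.rpow_le_rpow (volume_rpow_level_le hθ0 hF _) (by positivity)
          _ = lam v := by rw [← ENNReal.rpow_mul, mul_one_div_cancel hθ0.ne', ENNReal.rpow_one]
      calc ∫⁻ t in Set.Ioo (0:ℝ) k,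
            m t ^ (θ - 1) * {p : ℝ × ℝ | ENNReal.ofReal p.2 < m p.1}.indicator 1 (t, v)
          = ∫⁻ t in Set.Ioo (0:ℝ) k,
            ((fun t => m t ^ (θ - 1)) * fun t => ({t' : ℝ | ENNReal.ofReal v < m t'}.indicator 1 t : ℝ≥0∞)) t := by
            refine lintegral_congr fun t => ?_
            simp only [Pi.mul_apply, Set.indicator_apply, Set.mem_setOf_eq, Pi.one_apply]
        _ ≤ _ := hold
        _ ≤ W ^ ((θ-1)/θ) * lam v := by
            beta_reduce
            rw [heq1]
            exact mul_le_mul_right heq2 _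
    -- combine
    have hWle : W ≤ W ^ ((θ-1)/θ) * (∫⁻ s in Set.Ioi (0:ℝ), F s) := by
      calc W = _ := hwm
        _ = _ := hswap
        _ ≤ ∫⁻ v in Set.Ioi (0:ℝ), W ^ ((θ-1)/θ) * lam v := lintegral_mono fun v => hv v
        _ = W ^ ((θ-1)/θ) * ∫⁻ v in Set.Ioi (0:ℝ), lam v :=
            lintegral_const_mul' _ _ (ENNReal.rpow_ne_top_of_nonneg (by positivity) hWtop)
        _ = W ^ ((θ-1)/θ) * (∫⁻ s in Set.Ioi (0:ℝ), F s) := by rw [hlamint]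
    have hfinal : W ≤ (∫⁻ s in Set.Ioi (0:ℝ), F s) ^ θ := by
      by_cases hW0 : W = 0
      · rw [hW0]; exact zero_le
      have h1 : W ^ (1/θ) ≤ ∫⁻ s in Set.Ioi (0:ℝ), F s := by
        have hne : W ^ ((θ-1)/θ) ≠ 0 := by
          simp only [ne_eq, ENNReal.rpow_eq_zero_iff, not_or, not_and]
          constructor
          · intro h; exact absurd h hW0
          · intro h; exact absurd h hWtop
        have hnt : W ^ ((θ-1)/θ) ≠ ⊤ := ENNReal.rpow_ne_top_of_nonneg (by positivity) hWtop
        rw [← ENNReal.mul_le_mul_iff_right hne hnt]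
        calc W ^ ((θ-1)/θ) * W ^ (1/θ) = W := by
              rw [← ENNReal.rpow_add_of_nonneg _ _ (by positivity) (by positivity)]
              rw [show (θ-1)/θ + 1/θ = 1 by field_simp; ring, ENNReal.rpow_one]
          _ ≤ _ := hWle
      calc W = (W ^ (1/θ)) ^ θ := by
            rw [← ENNReal.rpow_mul, one_div, inv_mul_cancel₀ hθ0.ne', ENNReal.rpow_one]
        _ ≤ (∫⁻ s in Set.Ioi (0:ℝ), F s) ^ θ := ENNReal.rpow_le_rpow h1 hθ0.le
    exact hfinal
  -- supremum step
  have hmeask : ∀ k : ℕ, Measurable fun t : ℝ =>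
      (Set.Ioo (0:ℝ) k).indicator (fun t => (min (F (t ^ (1/θ))) k) ^ θ) t := fun k =>
    ((ENNReal.continuous_rpow_const.measurable).comp (hum.min measurable_const)).indicator
      measurableSet_Ioo
  have hmono : Monotone fun (k:ℕ) (t:ℝ) =>
      (Set.Ioo (0:ℝ) k).indicator (fun t => (min (F (t ^ (1/θ))) k) ^ θ) t := by
    intro k k' hk t
    dsimp only
    by_cases ht : t ∈ Set.Ioo (0:ℝ) k
    · have ht' : t ∈ Set.Ioo (0:ℝ) (k':ℝ) := ⟨ht.1, lt_of_lt_of_le ht.2 (Nat.cast_le.mpr hk)⟩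
      rw [Set.indicator_of_mem ht, Set.indicator_of_mem ht']
      exact ENNReal.rpow_le_rpow (min_le_min le_rfl (Nat.cast_le.mpr hk)) hθ0.le
    · rw [Set.indicator_of_notMem ht]; exact zero_le
  have hpt : ∀ t ∈ Set.Ioi (0:ℝ), F (t ^ (1/θ)) ^ θ
      = ⨆ k : ℕ, (Set.Ioo (0:ℝ) k).indicator (fun t => (min (F (t ^ (1/θ))) k) ^ θ) t := by
    intro t ht
    obtain ⟨k1, hk1⟩ := exists_nat_gt t
    apply le_antisymm
    · rcases eq_or_ne (F (t ^ (1/θ))) ⊤ with hut | hut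
      · refine le_trans (le_of_eq (by rw [hut, ENNReal.top_rpow_of_pos hθ0])) ?_
        refine le_of_eq (iSup_eq_top.2 fun b hb => ?_).symm
        obtain ⟨k0, hk0⟩ := ENNReal.exists_nat_gt (lt_top_iff_ne_top.1 hb)
        refine ⟨k0 + k1, ?_⟩
        have htk : t ∈ Set.Ioo (0:ℝ) ((k0 + k1 : ℕ):ℝ) :=
          ⟨ht, by push_cast; linarith⟩
        rw [Set.indicator_of_mem htk, hut, min_eq_right le_top]
        have hk11 : (1:ℝ≥0∞) ≤ ((k0 + k1 : ℕ):ℝ≥0∞) := by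
          rw [Nat.one_le_cast]
          have h0t : (0:ℝ) < k1 := lt_trans ht hk1
          have : 0 < k1 := by exact_mod_cast h0t
          omega
        calc b < (k0:ℝ≥0∞) := hk0
          _ ≤ ((k0 + k1 : ℕ):ℝ≥0∞) := by exact_mod_cast Nat.le_add_right k0 k1
          _ = ((k0 + k1 : ℕ):ℝ≥0∞) ^ (1:ℝ) := (ENNReal.rpow_one _).symm
          _ ≤ ((k0 + k1 : ℕ):ℝ≥0∞) ^ θ := ENNReal.rpow_le_rpow_of_exponent_le hk11 hθ
      · obtain ⟨k0, hk0⟩ := ENNReal.exists_nat_gt hut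
        have htk : t ∈ Set.Ioo (0:ℝ) ((k0 + k1 : ℕ):ℝ) := ⟨ht, by push_cast; linarith⟩
        refine le_trans (le_of_eq ?_) (le_iSup _ (k0 + k1))
        rw [Set.indicator_of_mem htk]
        congr 1
        rw [min_eq_left]
        refine le_trans hk0.le ?_
        exact_mod_cast Nat.le_add_right k0 k1
    · refine iSup_le fun k => ?_
      by_cases htk : t ∈ Set.Ioo (0:ℝ) k
      · rw [Set.indicator_of_mem htk]
        exact ENNReal.rpow_le_rpow (min_le_left _ _) hθ0.le
      · rw [Set.indicator_of_notMem htk]; exact zero_le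
  calc ∫⁻ t in Set.Ioi (0:ℝ), F (t ^ (1/θ)) ^ θ
      = ∫⁻ t, (Set.Ioi (0:ℝ)).indicator (fun t => F (t ^ (1/θ)) ^ θ) t := by
        rw [lintegral_indicator measurableSet_Ioi]
    _ = ∫⁻ t, ⨆ k : ℕ, (Set.Ioo (0:ℝ) k).indicator (fun t => (min (F (t ^ (1/θ))) k) ^ θ) t := by
        refine lintegral_congr fun t => ?_
        by_cases ht : t ∈ Set.Ioi (0:ℝ)
        · rw [Set.indicator_of_mem ht]; exact hpt t ht
        · rw [Set.indicator_of_notMem ht]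
          symm
          simp only [ENNReal.iSup_eq_zero]
          intro k
          exact Set.indicator_of_notMem (fun h => ht h.1) _
    _ = ⨆ k : ℕ, ∫⁻ t, (Set.Ioo (0:ℝ) k).indicator (fun t => (min (F (t ^ (1/θ))) k) ^ θ) t :=
        lintegral_iSup hmeask hmono
    _ = ⨆ k : ℕ, ∫⁻ t in Set.Ioo (0:ℝ) k, (min (F (t ^ (1/θ))) k) ^ θ :=
        iSup_congr fun k => lintegral_indicator measurableSet_Ioo _
    _ ≤ (∫⁻ s in Set.Ioi (0:ℝ), F s) ^ θ := iSup_le main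


end MorreyAux

/-- (M5): `𝓜^p_q(H^d) ↪ 𝓜^{θp}_{θq}(H^{θd})` with constant `θ`. -/
theorem morrey_embedding (n : ℕ) (d p q θ : ℝ)
    (hd : 0 < d) (hdn : d ≤ n) (hθ1 : 1 ≤ θ) (hθ : θ * d ≤ n)
    (hq : 0 < q) (hqp : q ≤ p) :
    ∀ f : (Fin n → ℝ) → ℝ, Measurable f →
      morreyNorm n (θ * d) (θ * p) (θ * q) f ≤
        ENNReal.ofReal θ * morreyNorm n d p q f := by
  intro f _
  have hθ0 : 0 < θ := lt_of_lt_of_le one_pos hθ1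
  have hp : 0 < p := lt_of_lt_of_le hq hqp
  have key : morreyNorm n (θ * d) (θ * p) (θ * q) f ≤ morreyNorm n d p q f := by
    rw [morreyNorm, morreyNormE]
    refine iSup_le fun a => iSup_le fun l => iSup_le fun hl => ?_
    set g : (Fin n → ℝ) → ℝ≥0∞ := fun x => ENNReal.ofReal |f x| with hg
    set h : (Fin n → ℝ) → ℝ≥0∞ := (cubeSet n a l).indicator (fun x => g x ^ q) with hh
    have hind : ((cubeSet n a l).indicator fun x => g x ^ (θ * q)) = fun x => h x ^ θ := by
      funext x
      by_cases hx : x ∈ cubeSet n a l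
      · rw [Set.indicator_of_mem hx, hh, Set.indicator_of_mem hx, mul_comm,
          ENNReal.rpow_mul]
      · rw [Set.indicator_of_notMem hx, hh, Set.indicator_of_notMem hx,
          ENNReal.zero_rpow_of_pos hθ0]
    set F : ℝ → ℝ≥0∞ := fun s => hContent n d {x | ENNReal.ofReal s < h x} with hF
    have hFanti : Antitone F := fun s s' hss' =>
      MorreyAux.hContent_mono fun x hx => lt_of_le_of_lt (ENNReal.ofReal_le_ofReal hss') hx
    have hchoq : choquetIntegral n (θ * d) ((cubeSet n a l).indicator fun x => g x ^ (θ * q))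
        ≤ (choquetIntegral n d h) ^ θ := by
      rw [hind, choquetIntegral]
      have hmeasF : Measurable fun t : ℝ => F (t ^ (1/θ)) ^ θ :=
        ENNReal.continuous_rpow_const.measurable.comp
          (hFanti.measurable.comp (Real.continuous_rpow_const (by positivity)).measurable)
      calc ∫⁻ t in Set.Ioi (0:ℝ), hContent n (θ * d) {x | ENNReal.ofReal t < h x ^ θ}
          ≤ ∫⁻ t in Set.Ioi (0:ℝ), F (t ^ (1/θ)) ^ θ := by
            refine setLIntegral_mono hmeasF fun t ht => ?_
            have hset : {x | ENNReal.ofReal t < h x ^ θ}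
                = {x | ENNReal.ofReal (t ^ (1/θ)) < h x} := by
              ext x
              simp only [Set.mem_setOf_eq]
              rw [← ENNReal.ofReal_rpow_of_pos ht]
              constructor
              · intro hlt
                have h2 := ENNReal.rpow_lt_rpow hlt (one_div_pos.mpr hθ0)
                rwa [← ENNReal.rpow_mul, mul_one_div_cancel hθ0.ne', ENNReal.rpow_one] at h2
              · intro hlt
                have h2 := ENNReal.rpow_lt_rpow hlt hθ0
                rwa [← ENNReal.rpow_mul, one_div, inv_mul_cancel₀ hθ0.ne',
                  ENNReal.rpow_one] at h2
            rw [hset]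
            exact MorreyAux.hContent_rpow_le hθ1 _
        _ ≤ (∫⁻ s in Set.Ioi (0:ℝ), F s) ^ θ := MorreyAux.key_ineq hθ1 hFanti
        _ = (choquetIntegral n d h) ^ θ := rfl
    have hexp : θ * d / (θ * p) - θ * d / (θ * q) = d / p - d / q := by
      rw [mul_div_mul_left _ _ hθ0.ne', mul_div_mul_left _ _ hθ0.ne']
    calc ENNReal.ofReal (l ^ (θ * d / (θ * p) - θ * d / (θ * q))) *
          (choquetIntegral n (θ * d) ((cubeSet n a l).indicator fun x => g x ^ (θ * q)))
            ^ (1 / (θ * q))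
        ≤ ENNReal.ofReal (l ^ (d / p - d / q)) * (choquetIntegral n d h) ^ (1 / q) := by
          rw [hexp]
          refine mul_le_mul_right ?_ _
          calc (choquetIntegral n (θ * d) ((cubeSet n a l).indicator fun x => g x ^ (θ * q)))
                ^ (1 / (θ * q))
              ≤ ((choquetIntegral n d h) ^ θ) ^ (1 / (θ * q)) :=
                ENNReal.rpow_le_rpow hchoq (by positivity)
            _ = (choquetIntegral n d h) ^ (1 / q) := by
                rw [← ENNReal.rpow_mul]
                congr 1
                field_simp
      _ ≤ morreyNorm n d p q f := by
          rw [morreyNorm, morreyNormE]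
          exact le_iSup_of_le a (le_iSup_of_le l (le_iSup_of_le hl le_rfl))
  calc morreyNorm n (θ * d) (θ * p) (θ * q) f ≤ morreyNorm n d p q f := key
    _ ≤ ENNReal.ofReal θ * morreyNorm n d p q f := by
        refine le_mul_of_one_le_left zero_le ?_
        rw [← ENNReal.ofReal_one]
        exact ENNReal.ofReal_le_ofReal hθ1


end
end
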